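/- Let U, V be subcategories of R * R[1]. Then [R[1]](U, V[1]) = 0 if and only if every object U ∈ U admits a triangle R1 --f--> R2 -> U -> R1[1] with R1, R2 ∈ R such that Hom_C(f, V) : Hom(R2, V) -> Hom(R1, V) is surjective for every V ∈ V. -/

import Mathlib

open CategoryTheory CategoryTheory.Limits CategoryTheory.Pretriangulated

universe v u w

namespace RelCT

/-- Krull–Schmidt: every object decomposes as a finite biproduct of objects with local
endomorphism rings. -/
def KrullSchmidtCat (C : Type u) [Category.{v} C] [Preadditive C] : Prop :=
  ∀ X : C, ∃ (n : ℕ) (f : Fin n → C) (p : ∀ i, X ⟶ f i) (ι : ∀ i, f i ⟶ X),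
    (∀ i, ι i ≫ p i = 𝟙 (f i)) ∧ (∑ i, p i ≫ ι i) = 𝟙 X ∧
    ∀ i (φ : f i ⟶ f i), IsIso φ ∨ IsIso (𝟙 (f i) - φ)

/-- `Fac W`: objects admitting an epimorphism from an object of `W`. -/
def FacSet {Q : Type w} [Category Q] (W : Set Q) : Set Q :=
  {Y | ∃ X ∈ W, ∃ p : X ⟶ Y, Epi p}

/-- `Ext¹(X, F) = 0`, expressed as: every short exact sequence
`0 → F → E → X → 0` splits. -/
def Ext1Zero {Q : Type w} [Category Q] [Abelian Q] (X F : Q) : Prop :=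
  ∀ S : CategoryTheory.ShortComplex Q, S.ShortExact → (S.X₁ ≅ F) → (S.X₃ ≅ X) →
    ∃ r : S.X₂ ⟶ S.X₁, S.f ≫ r = 𝟙 S.X₁

variable {C : Type u} [Category.{v} C] [Preadditive C] [HasZeroObject C]
  [HasShift C ℤ] [∀ n : ℤ, (CategoryTheory.shiftFunctor C n).Additive] [Pretriangulated C]

/-- The shift `D[n]` of a collection of objects, closed under isomorphism. -/
def shiftSet (D : Set C) (n : ℤ) : Set C :=
  {X | ∃ Y ∈ D, Nonempty (X ≅ Y⟦n⟧)}

/-- `f` factors through an object of `D`. -/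
def Factors (D : Set C) {A B : C} (f : A ⟶ B) : Prop :=
  ∃ (Z : C) (g : A ⟶ Z) (h : Z ⟶ B), Z ∈ D ∧ f = g ≫ h

/-- `X * Y`: objects `M` admitting a distinguished triangle `A → M → B → A[1]`
with `A ∈ X`, `B ∈ Y`. -/
def star (X Y : Set C) : Set C :=
  {M | ∃ (A B : C) (f : A ⟶ M) (g : M ⟶ B) (h : B ⟶ A⟦(1:ℤ)⟧),
    A ∈ X ∧ B ∈ Y ∧ (Triangle.mk f g h ∈ distTriang C)}

/-- `R` is rigid: `Hom(R, R[1]) = 0`. -/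
def Rigid (R : Set C) : Prop :=
  ∀ ⦃A B : C⦄, A ∈ R → B ∈ R → ∀ f : A ⟶ B⟦(1:ℤ)⟧, f = 0

/-- `[R[1]](X, Y[1]) = 0` : every morphism from an object of `X` to a first shift of
an object of `Y` which factors through `R[1]` vanishes. -/
def RelRigid (R X Y : Set C) : Prop :=
  ∀ ⦃A B : C⦄, A ∈ X → B ∈ Y → ∀ f : A ⟶ B⟦(1:ℤ)⟧, Factors (shiftSet R 1) f → f = 0

/-- Closure of a collection of objects under finite direct sums and direct summands. -/
inductive addClosure (D : Set C) : C → Prop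
  | of {X : C} : X ∈ D → addClosure D X
  | zero {X : C} : IsZero X → addClosure D X
  | sum {X Y Z : C} : addClosure D X → addClosure D Y →
      (∃ (pX : Z ⟶ X) (pY : Z ⟶ Y) (iX : X ⟶ Z) (iY : Y ⟶ Z),
        iX ≫ pX = 𝟙 X ∧ iY ≫ pY = 𝟙 Y ∧ pX ≫ iX + pY ≫ iY = 𝟙 Z) →
      addClosure D Z
  | smd {X Y : C} : addClosure D Y → (∃ (s : X ⟶ Y) (r : Y ⟶ X), s ≫ r = 𝟙 X) →
      addClosure D X

/-- `D` is closed under finite direct sums and direct summands. -/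
def AddClosed (D : Set C) : Prop := ∀ X : C, addClosure D X → X ∈ D

/-- closed under direct sums (expressed via biproduct data). -/
def SumClosed (D : Set C) : Prop :=
  ∀ ⦃X Y Z : C⦄, X ∈ D → Y ∈ D →
    (∃ (pX : Z ⟶ X) (pY : Z ⟶ Y) (iX : X ⟶ Z) (iY : Y ⟶ Z),
      iX ≫ pX = 𝟙 X ∧ iY ≫ pY = 𝟙 Y ∧ pX ≫ iX + pY ≫ iY = 𝟙 Z) → Z ∈ D

/-- closed under direct summands. -/
def SummandClosed (D : Set C) : Prop :=
  ∀ ⦃X Y : C⦄, Y ∈ D → (∃ (s : X ⟶ Y) (r : Y ⟶ X), s ≫ r = 𝟙 X) → X ∈ D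

/-- closed under isomorphisms. -/
def IsoClosed (D : Set C) : Prop :=
  ∀ ⦃X Y : C⦄, X ∈ D → Nonempty (X ≅ Y) → Y ∈ D

/-- `f : A ⟶ X` is a left `D`-approximation of `A`. -/
def IsLeftApprox (D : Set C) {A X : C} (f : A ⟶ X) : Prop :=
  X ∈ D ∧ ∀ ⦃X' : C⦄, X' ∈ D → ∀ g : A ⟶ X', ∃ h : X ⟶ X', f ≫ h = g

/-- `f : X ⟶ A` is a right `D`-approximation of `A`. -/
def IsRightApprox (D : Set C) {X A : C} (f : X ⟶ A) : Prop :=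
  X ∈ D ∧ ∀ ⦃X' : C⦄, X' ∈ D → ∀ g : X' ⟶ A, ∃ h : X' ⟶ X, h ≫ f = g

/-- `f` is left minimal. -/
def LeftMinimal {A B : C} (f : A ⟶ B) : Prop :=
  ∀ u : B ⟶ B, f ≫ u = f → IsIso u

/-- `f` is right minimal. -/
def RightMinimal {A B : C} (f : A ⟶ B) : Prop :=
  ∀ u : A ⟶ A, u ≫ f = f → IsIso u

/-- `f` lies in the Jacobson radical of the category. -/
def InRadical {A B : C} (f : A ⟶ B) : Prop :=
  ∀ g : B ⟶ A, IsIso (𝟙 A - f ≫ g)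

/-- indecomposable object. -/
def Indec (W : C) : Prop :=
  ¬ IsZero W ∧ ∀ p : W ⟶ W, p ≫ p = p → p = 0 ∨ p = 𝟙 W

/-- two-term `R[1]`-rigid subcategory. -/
def TwoTermRigid (R X : Set C) : Prop :=
  RelRigid R X X ∧ X ⊆ star R (shiftSet R 1)

/-- two-term maximal `R[1]`-rigid subcategory. -/
def TwoTermMaximal (R X : Set C) : Prop :=
  TwoTermRigid R X ∧
  ∀ M ∈ star R (shiftSet R 1),
    RelRigid R {Z | addClosure (insert M X) Z} {Z | addClosure (insert M X) Z} → M ∈ X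

/-- two-term weak `R[1]`-cluster tilting subcategory. -/
def TwoTermWCT (R X : Set C) : Prop :=
  X ⊆ star R (shiftSet R 1) ∧ R ⊆ star (shiftSet X (-1)) X ∧
  ∀ M : C, M ∈ X ↔ (M ∈ star R (shiftSet R 1) ∧ RelRigid R {M} X ∧ RelRigid R X {M})

/-- `R(X) = { R₀ ∈ R | Hom(R₀, X) = 0 }`. -/
def RZero (R X : Set C) : Set C :=
  {A | A ∈ R ∧ ∀ B ∈ X, ∀ f : A ⟶ B, f = 0}

/-- `X` is `R[1]`-functorially finite. -/
def RFunctoriallyFinite (R X : Set C) : Prop :=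
  (∀ R₀ ∈ R, ∃ (X₀ : C) (f : R₀ ⟶ X₀), IsLeftApprox X f) ∧
  (∀ A ∈ shiftSet R 1, ∃ (X₀ : C) (f : X₀ ⟶ A), IsRightApprox X f)

/-- Data of triangles `R₀ → X^{R₀} → V^{R₀} → R₀[1]` with minimal left `X`-approximations,
defining the completion `M_X`. -/
structure MData (R X : Set C) where
  obj : ∀ R₀ : C, R₀ ∈ R → C
  cone : ∀ R₀ : C, R₀ ∈ R → C
  f : ∀ (R₀ : C) (h : R₀ ∈ R), R₀ ⟶ obj R₀ h
  g : ∀ (R₀ : C) (h : R₀ ∈ R), obj R₀ h ⟶ cone R₀ h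
  w : ∀ (R₀ : C) (h : R₀ ∈ R), cone R₀ h ⟶ R₀⟦(1:ℤ)⟧
  tri : ∀ (R₀ : C) (h : R₀ ∈ R), Triangle.mk (f R₀ h) (g R₀ h) (w R₀ h) ∈ distTriang C
  approx : ∀ (R₀ : C) (h : R₀ ∈ R), IsLeftApprox X (f R₀ h)
  minimal : ∀ (R₀ : C) (h : R₀ ∈ R), LeftMinimal (f R₀ h)

/-- `M_X = add (X ∪ {V^R | R ∈ R})`. -/
def MData.cat {R X : Set C} (d : MData R X) : Set C :=
  {Z | addClosure (X ∪ {V | ∃ (R₀ : C) (h : R₀ ∈ R), V = d.cone R₀ h}) Z}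

/-- Data of triangles `R₀ → V_{R₀} → U_{R₀} → R₀[1]` with the last map a right
`X`-approximation, defining the completion `N_X`. -/
structure NData (R X : Set C) where
  cocone : ∀ R₀ : C, R₀ ∈ R → C
  obj : ∀ R₀ : C, R₀ ∈ R → C
  a : ∀ (R₀ : C) (h : R₀ ∈ R), R₀ ⟶ cocone R₀ h
  b : ∀ (R₀ : C) (h : R₀ ∈ R), cocone R₀ h ⟶ obj R₀ h
  c : ∀ (R₀ : C) (h : R₀ ∈ R), obj R₀ h ⟶ R₀⟦(1:ℤ)⟧
  tri : ∀ (R₀ : C) (h : R₀ ∈ R), Triangle.mk (a R₀ h) (b R₀ h) (c R₀ h) ∈ distTriang C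
  approx : ∀ (R₀ : C) (h : R₀ ∈ R), IsRightApprox X (c R₀ h)

/-- `N_X = add (X ∪ {V_R | R ∈ R})`. -/
def NData.cat {R X : Set C} (d : NData R X) : Set C :=
  {Z | addClosure (X ∪ {V | ∃ (R₀ : C) (h : R₀ ∈ R), V = d.cocone R₀ h}) Z}

/-- `(M, N)` is an `X`-mutation pair. -/
def MutationPair (R X M N : Set C) : Prop :=
  M ≠ N ∧ TwoTermWCT R M ∧ TwoTermWCT R N ∧ X ⊆ M ∧ X ⊆ N ∧
  (∀ Y ∈ M, ∃ (Z X₀ : C) (z : Z ⟶ X₀) (x : X₀ ⟶ Y) (y : Y ⟶ Z⟦(1:ℤ)⟧),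
      Z ∈ N ∧ X₀ ∈ X ∧ (Triangle.mk z x y ∈ distTriang C) ∧ Factors (shiftSet R 1) y) ∧
  (∀ Z' ∈ N, ∃ (X' Y' : C) (z' : Z' ⟶ X') (x' : X' ⟶ Y') (y' : Y' ⟶ Z'⟦(1:ℤ)⟧),
      X' ∈ X ∧ Y' ∈ M ∧ (Triangle.mk z' x' y' ∈ distTriang C) ∧ Factors (shiftSet R 1) y')

/-- almost complete two-term weak `R[1]`-cluster tilting subcategory. -/
def AlmostComplete (R X : Set C) : Prop :=
  TwoTermRigid R X ∧ RFunctoriallyFinite R X ∧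
    ∃ W : C, Indec W ∧ W ∉ X ∧ TwoTermWCT R {Z | addClosure (insert W X) Z}

/-- completion of an almost complete subcategory `X`. -/
def IsCompletion (R X U : Set C) : Prop :=
  TwoTermWCT R U ∧ ∃ W : C, Indec W ∧ W ∉ X ∧ U = {Z | addClosure (insert W X) Z}


theorem statement_5 (hKS : KrullSchmidtCat C) (R U V : Set C)
    (hrig : Rigid R) (haddR : AddClosed R)
    (hU : U ⊆ star R (shiftSet R 1)) (hV : V ⊆ star R (shiftSet R 1)) :
    RelRigid R U V ↔
      ∀ Uo ∈ U, ∃ (R₁ R₂ : C) (f : R₁ ⟶ R₂) (u₁ : R₂ ⟶ Uo) (u₂ : Uo ⟶ R₁⟦(1:ℤ)⟧),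
        R₁ ∈ R ∧ R₂ ∈ R ∧ (Triangle.mk f u₁ u₂ ∈ distTriang C) ∧
        ∀ Vo ∈ V, ∀ g : R₁ ⟶ Vo, ∃ h : R₂ ⟶ Vo, f ≫ h = g := by
  constructor
  · intro hrel Uo hUo
    obtain ⟨A, B, a0, b0, c0, hA, hB, hT0⟩ := hU hUo
    obtain ⟨R₁, hR₁, ⟨e⟩⟩ := hB
    -- replace B by R₁⟦1⟧
    set b' : Uo ⟶ R₁⟦(1:ℤ)⟧ := b0 ≫ e.hom with hb'
    set c' : R₁⟦(1:ℤ)⟧ ⟶ A⟦(1:ℤ)⟧ := e.inv ≫ c0 with hc'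
    have hT' : Triangle.mk a0 b' c' ∈ distTriang C := by
      refine isomorphic_distinguished _ hT0 _ ?_
      exact Triangle.isoMk _ _ (Iso.refl _) (Iso.refl _) e.symm (by change a0 ≫ 𝟙 Uo = 𝟙 A ≫ a0; simp)
        (by change b' ≫ e.symm.hom = 𝟙 Uo ≫ b0; simp [hb'])
        (by change c' ≫ (shiftFunctor C (1:ℤ)).map (𝟙 A) = e.symm.hom ≫ c0; simp [hc'])
    set f : R₁ ⟶ A := -((shiftFunctor C (1:ℤ)).preimage c') with hf
    have hT1 : Triangle.mk f a0 b' ∈ distTriang C := by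
      rw [rotate_distinguished_triangle]
      refine isomorphic_distinguished _ hT' _ ?_
      refine Triangle.isoMk _ _ (Iso.refl _) (Iso.refl _) (Iso.refl _) (by change a0 ≫ 𝟙 Uo = 𝟙 A ≫ a0; simp)
        (by change b' ≫ 𝟙 (R₁⟦(1:ℤ)⟧) = 𝟙 Uo ≫ b'; simp) ?_
      dsimp [Triangle.rotate]
      change (-(shiftFunctor C (1:ℤ)).map f) ≫ (shiftFunctor C (1:ℤ)).map (𝟙 A) = 𝟙 (R₁⟦(1:ℤ)⟧) ≫ c'
      simp [hf]
    refine ⟨R₁, A, f, a0, b', hR₁, hA, hT1, ?_⟩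
    intro Vo hVo g
    have hfac : Factors (shiftSet R 1) (b' ≫ g⟦(1:ℤ)⟧') :=
      ⟨R₁⟦(1:ℤ)⟧, b', g⟦(1:ℤ)⟧', ⟨R₁, hR₁, ⟨Iso.refl _⟩⟩, rfl⟩
    have hzero : b' ≫ g⟦(1:ℤ)⟧' = 0 := hrel hUo hVo _ hfac
    obtain ⟨ψ, hψ⟩ : ∃ ψ : A⟦(1:ℤ)⟧ ⟶ Vo⟦(1:ℤ)⟧, g⟦(1:ℤ)⟧' = (-f⟦(1:ℤ)⟧') ≫ ψ :=
      Triangle.yoneda_exact₃ _ (rot_of_distTriang _ hT1)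
      (g⟦(1:ℤ)⟧') hzero
    refine ⟨-((shiftFunctor C (1:ℤ)).preimage ψ), (shiftFunctor C (1:ℤ)).map_injective ?_⟩
    simp only [Functor.map_comp, Functor.map_neg, Functor.map_preimage]
    rw [hψ]
    simp
  · intro hyp A B hAU hBV φ hfac
    obtain ⟨Z, g0, h0, hZ, heq⟩ := hfac
    obtain ⟨R₀, hR₀, ⟨e⟩⟩ := hZ
    obtain ⟨R₁, R₂, f, u₁, u₂, hR₁, hR₂, hTri, hsurj⟩ := hyp A hAU
    have h1 : u₁ ≫ g0 = 0 := by
      have : (u₁ ≫ g0) ≫ e.hom = 0 := hrig hR₂ hR₀ _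
      calc u₁ ≫ g0 = ((u₁ ≫ g0) ≫ e.hom) ≫ e.inv := by simp
        _ = 0 := by rw [this]; simp
    obtain ⟨k, hk⟩ := Triangle.yoneda_exact₃ _ hTri g0 h1
    set m : R₁ ⟶ B := (shiftFunctor C (1:ℤ)).preimage (k ≫ h0) with hm
    obtain ⟨h', hh'⟩ := hsurj B hBV m
    have hzero31 : u₂ ≫ f⟦(1:ℤ)⟧' = 0 :=
      comp_distTriang_mor_zero₃₁ _ hTri
    calc φ = g0 ≫ h0 := heq
      _ = u₂ ≫ (k ≫ h0) := by rw [hk]; exact Category.assoc _ _ _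
      _ = u₂ ≫ m⟦(1:ℤ)⟧' := by rw [hm, Functor.map_preimage]
      _ = u₂ ≫ (f ≫ h')⟦(1:ℤ)⟧' := by rw [hh']
      _ = (u₂ ≫ f⟦(1:ℤ)⟧') ≫ h'⟦(1:ℤ)⟧' := by simp [Functor.map_comp]
      _ = 0 := by rw [hzero31]; simp

end RelCT
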